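/- Let c > 0 and γ > 0, and define h : ℝ → ℝ by h(t) = γ·exp(−ct) for t > 0 and h(t) = 0 for t ≤ 0. Let H ⊆ ℝ be countable and s : ℝ → ℝ. For t ∈ ℝ, whenever the family (s(τ)·h(t − τ))_{τ ∈ H, τ < t} is summable, define β(t) as its sum. Then for any two reals t_k < t_{k+1} such that the defining families at t_k and t_{k+1} are summable, β(t_{k+1}) = exp(−c(t_{k+1} − t_k))·β(t_k) + Σ_{τ ∈ H, t_k ≤ τ < t_{k+1}} s(τ)·h(t_{k+1} − τ). -/

import Mathlib

open Real

/-- Recursion for the burst width produced by the first-order adaptive unit with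
impulse response `h(t) = γ e^{−ct}` for `t > 0` and `h(t) = 0` for `t ≤ 0`. -/
theorem burst_width_recursion (c γ : ℝ) (hc : 0 < c) (hγ : 0 < γ)
    (h : ℝ → ℝ) (hh : ∀ t : ℝ, h t = if 0 < t then γ * Real.exp (-c * t) else 0)
    (H : Set ℝ) (hH : H.Countable) (s : ℝ → ℝ) (β : ℝ → ℝ)
    (tk tk1 : ℝ) (hlt : tk < tk1)
    (hsumk : Summable (fun τ : {τ : ℝ // τ ∈ H ∧ τ < tk} => s τ * h (tk - τ)))
    (hsumk1 : Summable (fun τ : {τ : ℝ // τ ∈ H ∧ τ < tk1} => s τ * h (tk1 - τ)))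
    (hβk : β tk = ∑' τ : {τ : ℝ // τ ∈ H ∧ τ < tk}, s τ * h (tk - τ))
    (hβk1 : β tk1 = ∑' τ : {τ : ℝ // τ ∈ H ∧ τ < tk1}, s τ * h (tk1 - τ)) :
    β tk1 = Real.exp (-c * (tk1 - tk)) * β tk +
      ∑' τ : {τ : ℝ // τ ∈ H ∧ tk ≤ τ ∧ τ < tk1}, s τ * h (tk1 - τ) := by
  set f : ℝ → ℝ := fun τ => s τ * h (tk1 - τ) with hf
  set S1 : Set ℝ := {τ | τ ∈ H ∧ τ < tk} with hS1
  set S2 : Set ℝ := {τ | τ ∈ H ∧ tk ≤ τ ∧ τ < tk1} with hS2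
  have hunion : S1 ∪ S2 = {τ | τ ∈ H ∧ τ < tk1} := by
    ext τ
    simp only [hS1, hS2, Set.mem_union, Set.mem_setOf_eq]
    constructor
    · rintro (⟨hτH, hτ⟩ | ⟨hτH, _, hτ⟩)
      · exact ⟨hτH, hτ.trans hlt⟩
      · exact ⟨hτH, hτ⟩
    · rintro ⟨hτH, hτ⟩
      rcases lt_or_ge τ tk with h' | h'
      · exact Or.inl ⟨hτH, h'⟩
      · exact Or.inr ⟨hτH, h', hτ⟩
  have hdisj : Disjoint S1 S2 := by
    rw [Set.disjoint_left]
    rintro τ ⟨_, h1⟩ ⟨_, h2, _⟩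
    exact absurd h1 (not_lt.2 h2)
  -- key pointwise identity on S1
  have hkey : ∀ τ : ℝ, τ < tk →
      f τ = Real.exp (-c * (tk1 - tk)) * (s τ * h (tk - τ)) := by
    intro τ hτ
    have h1 : 0 < tk - τ := by linarith
    have h2 : 0 < tk1 - τ := by linarith
    simp only [hf, hh, if_pos h1, if_pos h2]
    rw [show -c * (tk1 - τ) = -c * (tk1 - tk) + -c * (tk - τ) by ring,
      Real.exp_add]
    ring
  have hsumS1 : Summable (f ∘ ((↑) : S1 → ℝ)) := by
    have : (f ∘ ((↑) : S1 → ℝ)) =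
        fun τ : S1 => Real.exp (-c * (tk1 - tk)) * (s τ * h (tk - τ)) := by
      funext τ
      exact hkey τ τ.2.2
    rw [this]
    exact (hsumk.mul_left _)
  have hsumU : Summable (f ∘ ((↑) : ↥(S1 ∪ S2) → ℝ)) := by
    rw [hunion]; exact hsumk1
  have hsumS2 : Summable (f ∘ ((↑) : S2 → ℝ)) := by
    rw [summable_subtype_iff_indicator] at hsumU ⊢
    have : S2.indicator f = S2.indicator ((S1 ∪ S2).indicator f) := by
      rw [Set.indicator_indicator,
        Set.inter_eq_self_of_subset_left Set.subset_union_right]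
    rw [this]
    exact hsumU.indicator _
  have hsplit : ∑' τ : ↥(S1 ∪ S2), f τ = (∑' τ : S1, f τ) + ∑' τ : S2, f τ :=
    hsumS1.tsum_union_disjoint hdisj hsumS2
  have hS1sum : ∑' τ : S1, f τ = Real.exp (-c * (tk1 - tk)) * β tk := by
    rw [hβk]
    rw [← tsum_mul_left]
    exact tsum_congr fun τ => hkey τ τ.2.2
  calc β tk1 = ∑' τ : ↥(S1 ∪ S2), f τ := by rw [hunion]; exact hβk1
    _ = Real.exp (-c * (tk1 - tk)) * β tk + ∑' τ : S2, f τ := by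
        rw [hsplit, hS1sum]
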